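/- Let T > 0, γ > 0, θ ∈ ℝ, B ∈ ℂ^{1×2}. Let ψ¹, φ¹ ∈ C¹_b([−T,T]×ℝ, ℂ²), and suppose ψ², φ² ∈ C¹_b(D₂, ℂ⁴) both satisfy the free massless multi-time Dirac equations i(∂_{t_k} − s_k∂_{z_k})χ_{s₁s₂} = 0 (k = 1,2) on the interior of D₂, the interior-boundary conditions χ_{−+}(t,z,t,z) − e^{iθ}χ_{+−}(t,z,t,z) = Bψ¹(t,z) for χ = ψ² and = Bφ¹(t,z) for χ = φ², and have the same initial data: ψ²(0,z₁,0,z₂) = φ²(0,z₁,0,z₂) for all z₁ ≤ z₂. Then, with the weighted norms defined below, ‖ψ² − φ²‖_{2,γ} ≤ ‖B‖_∞ · ‖ψ¹ − φ¹‖_{1,γ}, where ‖B‖_∞ is the operator norm of B from (ℂ², max-norm) to ℂ. -/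

import Mathlib

open scoped BigOperators
open MeasureTheory

noncomputable section

/-- spin value: `false` ↦ −1, `true` ↦ +1 -/
def sval (b : Bool) : ℝ := if b then 1 else -1

/-- partial derivative ∂_t for a one-particle function (within `S`) -/
def pT {F : Type*} [NormedAddCommGroup F] [NormedSpace ℝ F]
    (S : Set (ℝ × ℝ)) (f : ℝ × ℝ → F) (x : ℝ × ℝ) : F :=
  fderivWithin ℝ f S x ((1 : ℝ), (0 : ℝ))

/-- partial derivative ∂_z for a one-particle function (within `S`) -/
def pZ {F : Type*} [NormedAddCommGroup F] [NormedSpace ℝ F]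
    (S : Set (ℝ × ℝ)) (f : ℝ × ℝ → F) (x : ℝ × ℝ) : F :=
  fderivWithin ℝ f S x ((0 : ℝ), (1 : ℝ))

/-- the ordered spacelike two-particle configurations 𝒮₁⁽²⁾;
a point is ((t₁,z₁),(t₂,z₂)) -/
def S2 : Set ((ℝ × ℝ) × (ℝ × ℝ)) :=
  {p | (p.1.1 - p.2.1) ^ 2 < (p.1.2 - p.2.2) ^ 2 ∧ p.1.2 < p.2.2}

/-- the two-particle domain: closure of 𝒮₁⁽²⁾ with both times in [−T,T] -/
def D2 (T : ℝ) : Set ((ℝ × ℝ) × (ℝ × ℝ)) :=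
  {p | p ∈ closure S2 ∧ p.1.1 ∈ Set.Icc (-T) T ∧ p.2.1 ∈ Set.Icc (-T) T}

/-- the interior two-particle domain: 𝒮₁⁽²⁾ with both times in [−T,T] -/
def S2T (T : ℝ) : Set ((ℝ × ℝ) × (ℝ × ℝ)) :=
  {p | p ∈ S2 ∧ p.1.1 ∈ Set.Icc (-T) T ∧ p.2.1 ∈ Set.Icc (-T) T}

/-- the one-particle domain [−T,T] × ℝ -/
def strip (T : ℝ) : Set (ℝ × ℝ) := {p | p.1 ∈ Set.Icc (-T) T}

/-- coordinate directions in two-particle configuration space -/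
def e1T : (ℝ × ℝ) × (ℝ × ℝ) := (((1 : ℝ), (0 : ℝ)), ((0 : ℝ), (0 : ℝ)))
def e1Z : (ℝ × ℝ) × (ℝ × ℝ) := (((0 : ℝ), (1 : ℝ)), ((0 : ℝ), (0 : ℝ)))
def e2T : (ℝ × ℝ) × (ℝ × ℝ) := (((0 : ℝ), (0 : ℝ)), ((1 : ℝ), (0 : ℝ)))
def e2Z : (ℝ × ℝ) × (ℝ × ℝ) := (((0 : ℝ), (0 : ℝ)), ((0 : ℝ), (1 : ℝ)))

/-- C¹ functions on `S` that are bounded with bounded derivative -/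
def C1bOn {E F : Type*} [NormedAddCommGroup E] [NormedSpace ℝ E]
    [NormedAddCommGroup F] [NormedSpace ℝ F] (S : Set E) (f : E → F) : Prop :=
  ContDiffOn ℝ 1 f S ∧ (∃ C, ∀ x ∈ S, ‖f x‖ ≤ C) ∧ ∃ C, ∀ x ∈ S, ‖fderivWithin ℝ f S x‖ ≤ C

/-- the pointwise quantity (|h(p)| + max_y |∂_y h(p)|)·e^{−γ|t|} entering the weighted
one-particle norm; ℂ² = (Bool → ℂ) carries the max (= Pi sup) norm. -/
def wnorm1 (T γ : ℝ) (h : ℝ × ℝ → Bool → ℂ) (p : ℝ × ℝ) : ℝ :=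
  (‖h p‖ + max ‖fderivWithin ℝ h (strip T) p ((1 : ℝ), (0 : ℝ))‖
      ‖fderivWithin ℝ h (strip T) p ((0 : ℝ), (1 : ℝ))‖) * Real.exp (-γ * |p.1|)

/-- the pointwise quantity (|g(p)| + max_y |∂_y g(p)|)·e^{−γ(|t₁|+|t₂|)/2} entering the
weighted two-particle norm; ℂ⁴ = (Bool × Bool → ℂ) carries the max (= Pi sup) norm. -/
def wnorm2 (T γ : ℝ) (g : (ℝ × ℝ) × (ℝ × ℝ) → Bool × Bool → ℂ)
    (p : (ℝ × ℝ) × (ℝ × ℝ)) : ℝ :=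
  (‖g p‖ + max (max ‖fderivWithin ℝ g (D2 T) p e1T‖ ‖fderivWithin ℝ g (D2 T) p e1Z‖)
      (max ‖fderivWithin ℝ g (D2 T) p e2T‖ ‖fderivWithin ℝ g (D2 T) p e2Z‖))
    * Real.exp (-γ * (|p.1.1| + |p.2.1|) / 2)

abbrev X4 := (ℝ × ℝ) × (ℝ × ℝ)

lemma mem_S2_iff {p : X4} :
    p ∈ S2 ↔ p.1.1 - p.2.1 < p.2.2 - p.1.2 ∧ p.2.1 - p.1.1 < p.2.2 - p.1.2 := by
  constructor
  · rintro ⟨h1, h2⟩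
    constructor <;> nlinarith [sq_nonneg (p.1.1 - p.2.1 + (p.1.2 - p.2.2)),
      sq_nonneg (p.1.1 - p.2.1 - (p.1.2 - p.2.2))]
  · rintro ⟨h1, h2⟩
    have hz : p.1.2 < p.2.2 := by linarith
    exact ⟨by nlinarith, hz⟩

/-- the closed version of `S2` -/
def CS2 : Set X4 :=
  {p | p.1.1 - p.2.1 ≤ p.2.2 - p.1.2 ∧ p.2.1 - p.1.1 ≤ p.2.2 - p.1.2}

lemma isClosed_CS2 : IsClosed CS2 := by
  have h1 : IsClosed {p : X4 | p.1.1 - p.2.1 ≤ p.2.2 - p.1.2} :=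
    isClosed_le (by fun_prop) (by fun_prop)
  have h2 : IsClosed {p : X4 | p.2.1 - p.1.1 ≤ p.2.2 - p.1.2} :=
    isClosed_le (by fun_prop) (by fun_prop)
  exact h1.inter h2

lemma closure_S2_eq : closure S2 = CS2 := by
  apply subset_antisymm
  · apply closure_minimal _ isClosed_CS2
    intro p hp
    rw [mem_S2_iff] at hp
    exact ⟨le_of_lt hp.1, le_of_lt hp.2⟩
  · intro p hp
    have : Filter.Tendsto (fun n : ℕ => (p.1, (p.2.1, p.2.2 + 1/(n+1)))) Filter.atTop (nhds p) := by
      have h0 : Filter.Tendsto (fun n : ℕ => p.2.2 + 1/(n+1 : ℝ)) Filter.atTop (nhds p.2.2) := by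
        have := tendsto_one_div_add_atTop_nhds_zero_nat (𝕜 := ℝ)
        have h' := Filter.Tendsto.const_add p.2.2 this
        simpa using h'
      have : Filter.Tendsto (fun n : ℕ => (p.2.1, p.2.2 + 1/(n+1 : ℝ))) Filter.atTop (nhds (p.2.1, p.2.2)) :=
        Filter.Tendsto.prodMk_nhds tendsto_const_nhds h0
      exact Filter.Tendsto.prodMk_nhds tendsto_const_nhds this
    apply mem_closure_of_tendsto this
    apply Filter.Eventually.of_forall
    intro n
    show _ ∈ S2
    rw [mem_S2_iff]
    have hn : (0:ℝ) < 1/(n+1) := by positivity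
    obtain ⟨h1, h2⟩ := hp
    constructor <;> · simp only; linarith

lemma mem_closure_S2_iff {p : X4} :
    p ∈ closure S2 ↔ p.1.1 - p.2.1 ≤ p.2.2 - p.1.2 ∧ p.2.1 - p.1.1 ≤ p.2.2 - p.1.2 := by
  rw [closure_S2_eq]; rfl

lemma convex_D2 (T : ℝ) : Convex ℝ (D2 T) := by
  intro x hx y hy a b ha hb hab
  obtain ⟨hx1, hx2, hx3⟩ := hx
  obtain ⟨hy1, hy2, hy3⟩ := hy
  rw [mem_closure_S2_iff] at hx1 hy1
  refine ⟨mem_closure_S2_iff.2 ⟨?_, ?_⟩, ⟨?_, ?_⟩, ⟨?_, ?_⟩⟩ <;>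
  · simp only [Prod.fst_add, Prod.snd_add, Prod.smul_fst, Prod.smul_snd, smul_eq_mul] at *
    rcases hx2 with ⟨hx2a, hx2b⟩; rcases hx3 with ⟨hx3a, hx3b⟩
    rcases hy2 with ⟨hy2a, hy2b⟩; rcases hy3 with ⟨hy3a, hy3b⟩
    nlinarith

lemma convex_S2 : Convex ℝ S2 := by
  intro x hx y hy a b ha hb hab
  rw [mem_S2_iff] at hx hy ⊢
  rcases le_or_gt a 0 with ha0 | ha0
  · have : a = 0 := le_antisymm ha0 ha
    subst this
    simp only [zero_smul, zero_add] at *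
    have : b = 1 := by linarith
    subst this
    simpa using hy
  · rcases le_or_gt b 0 with hb0 | hb0
    · have : b = 0 := le_antisymm hb0 hb
      subst this
      have : a = 1 := by linarith
      subst this
      simpa using hx
    · obtain ⟨hx1, hx2⟩ := hx
      obtain ⟨hy1, hy2⟩ := hy
      constructor <;>
      · simp only [Prod.fst_add, Prod.snd_add, Prod.smul_fst, Prod.smul_snd, smul_eq_mul]
        nlinarith

lemma isClosed_D2 (T : ℝ) : IsClosed (D2 T) := by
  have h1 : IsClosed {p : X4 | p.1.1 ∈ Set.Icc (-T) T} := by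
    have : IsClosed (Set.Icc (-T) T) := isClosed_Icc
    exact this.preimage (by fun_prop)
  have h2 : IsClosed {p : X4 | p.2.1 ∈ Set.Icc (-T) T} := by
    have : IsClosed (Set.Icc (-T) T) := isClosed_Icc
    exact this.preimage (by fun_prop)
  have : D2 T = closure S2 ∩ ({p : X4 | p.1.1 ∈ Set.Icc (-T) T} ∩ {p : X4 | p.2.1 ∈ Set.Icc (-T) T}) := by
    ext p
    simp only [D2, Set.mem_inter_iff, Set.mem_setOf_eq, Set.mem_Icc, and_assoc]
  rw [this]
  exact isClosed_closure.inter (h1.inter h2)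

/-- an interior point of `D2 T` -/
lemma interior_D2_nonempty {T : ℝ} (hT : 0 < T) : (interior (D2 T)).Nonempty := by
  refine ⟨((0, 0), (0, 3*T)), ?_⟩
  have hopen : IsOpen (S2 ∩ {p : X4 | p.1.1 ∈ Set.Ioo (-T) T} ∩ {p : X4 | p.2.1 ∈ Set.Ioo (-T) T}) := by
    have h0 : IsOpen S2 := by
      have : S2 = {p : X4 | p.1.1 - p.2.1 < p.2.2 - p.1.2} ∩ {p : X4 | p.2.1 - p.1.1 < p.2.2 - p.1.2} := by
        ext p; rw [Set.mem_inter_iff]; exact mem_S2_iff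
      rw [this]
      exact (isOpen_lt (by fun_prop) (by fun_prop)).inter (isOpen_lt (by fun_prop) (by fun_prop))
    exact (h0.inter (isOpen_Ioo.preimage (by fun_prop))).inter (isOpen_Ioo.preimage (by fun_prop))
  have hsub : (S2 ∩ {p : X4 | p.1.1 ∈ Set.Ioo (-T) T} ∩ {p : X4 | p.2.1 ∈ Set.Ioo (-T) T}) ⊆ D2 T := by
    rintro p ⟨⟨hp1, hp2⟩, hp3⟩
    exact ⟨subset_closure hp1, Set.Ioo_subset_Icc_self hp2, Set.Ioo_subset_Icc_self hp3⟩
  apply interior_maximal hsub hopen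
  refine ⟨⟨?_, ?_⟩, ?_⟩
  · rw [mem_S2_iff]; constructor <;> · simp; linarith
  · simp only [Set.mem_setOf_eq, Set.mem_Ioo]; constructor <;> linarith
  · simp only [Set.mem_setOf_eq, Set.mem_Ioo]; constructor <;> linarith

end

noncomputable section Chunk2

lemma uniqueDiffOn_D2 {T : ℝ} (hT : 0 < T) : UniqueDiffOn ℝ (D2 T) :=
  uniqueDiffOn_convex (convex_D2 T) (interior_D2_nonempty hT)

lemma dist4_lt {w x : X4} {ε : ℝ} (h1 : |w.1.1 - x.1.1| < ε) (h2 : |w.1.2 - x.1.2| < ε)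
    (h3 : |w.2.1 - x.2.1| < ε) (h4 : |w.2.2 - x.2.2| < ε) : dist w x < ε := by
  rw [Prod.dist_eq]
  exact max_lt
    (by rw [Prod.dist_eq]; exact max_lt (by rwa [Real.dist_eq]) (by rwa [Real.dist_eq]))
    (by rw [Prod.dist_eq]; exact max_lt (by rwa [Real.dist_eq]) (by rwa [Real.dist_eq]))

lemma mem_interior_D2 {T : ℝ} {x : X4} (hx : x ∈ interior (D2 T)) :
    x ∈ S2 ∧ x.1.1 ∈ Set.Ioo (-T) T ∧ x.2.1 ∈ Set.Ioo (-T) T := by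
  obtain ⟨ε, hε, hball⟩ := Metric.mem_nhds_iff.1 (mem_interior_iff_mem_nhds.1 hx)
  have hxD : x ∈ D2 T := interior_subset hx
  have key : ∀ w : X4, dist w x < ε → w ∈ D2 T := fun w hw => hball hw
  have h1 : ((x.1.1, x.1.2), (x.2.1, x.2.2 - ε/2)) ∈ D2 T := by
    apply key
    apply dist4_lt
    · simpa using hε
    · simpa using hε
    · simpa using hε
    · have he : x.2.2 - ε/2 - x.2.2 = -(ε/2) := by ring
      show |x.2.2 - ε/2 - x.2.2| < ε
      rw [he, abs_neg, abs_of_nonneg (by linarith)]; linarith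
  have h2 : ∀ δ : ℝ, |δ| ≤ ε/2 → ((x.1.1 + δ, x.1.2 + δ), x.2) ∈ D2 T := by
    intro δ hδ
    apply key
    apply dist4_lt
    · simpa using lt_of_le_of_lt hδ (by linarith)
    · simpa using lt_of_le_of_lt hδ (by linarith)
    · simpa using hε
    · simpa using hε
  have h3 : ∀ δ : ℝ, |δ| ≤ ε/2 → (x.1, (x.2.1 + δ, x.2.2 - δ)) ∈ D2 T := by
    intro δ hδ
    apply key
    apply dist4_lt
    · simpa using hε
    · simpa using hε
    · simpa using lt_of_le_of_lt hδ (by linarith)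
    · have he : x.2.2 - δ - x.2.2 = -δ := by ring
      show |x.2.2 - δ - x.2.2| < ε
      rw [he, abs_neg]; exact lt_of_le_of_lt hδ (by linarith)
  obtain ⟨hc, ht1, ht2⟩ := hxD
  rw [mem_closure_S2_iff] at hc
  have hc1 := h1.1
  rw [mem_closure_S2_iff] at hc1
  simp only at hc1
  have habs : |(ε/2 : ℝ)| ≤ ε/2 := le_of_eq (abs_of_nonneg (by linarith))
  have habs' : |(-(ε/2) : ℝ)| ≤ ε/2 := by rw [abs_neg]; exact habs
  have hp2 := (h2 (ε/2) habs).2.1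
  have hm2 := (h2 (-(ε/2)) habs').2.1
  have hp3 := (h3 (ε/2) habs).2.2
  have hm3 := (h3 (-(ε/2)) habs').2.2
  simp only [Set.mem_Icc] at hp2 hm2 hp3 hm3 ht1 ht2
  refine ⟨mem_S2_iff.2 ⟨by linarith, by linarith⟩, Set.mem_Ioo.2 ⟨by linarith, by linarith⟩,
    Set.mem_Ioo.2 ⟨by linarith, by linarith⟩⟩

lemma interior_D2_subset_S2T {T : ℝ} : interior (D2 T) ⊆ S2T T := by
  intro x hx
  obtain ⟨h1, h2, h3⟩ := mem_interior_D2 hx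
  exact ⟨h1, Set.Ioo_subset_Icc_self h2, Set.Ioo_subset_Icc_self h3⟩

lemma seg_mem_S2T {T : ℝ} {p q : X4} (hp : p ∈ S2T T) (hq : q ∈ D2 T) {s : ℝ}
    (hs : s ∈ Set.Ico (0:ℝ) 1) : p + s • (q - p) ∈ S2T T := by
  obtain ⟨hp1, hp2, hp3⟩ := hp
  obtain ⟨hq1, hq2, hq3⟩ := hq
  rw [mem_S2_iff] at hp1
  rw [mem_closure_S2_iff] at hq1
  obtain ⟨hs0, hs1⟩ := hs
  simp only [Set.mem_Icc] at hp2 hp3 hq2 hq3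
  refine ⟨mem_S2_iff.2 ⟨?_, ?_⟩, Set.mem_Icc.2 ⟨?_, ?_⟩, Set.mem_Icc.2 ⟨?_, ?_⟩⟩ <;>
  · simp only [Prod.fst_add, Prod.snd_add, Prod.smul_fst, Prod.smul_snd,
      Prod.fst_sub, Prod.snd_sub, smul_eq_mul]
    nlinarith [hp1.1, hp1.2, hq1.1, hq1.2]

lemma S2T_subset_D2 {T : ℝ} : S2T T ⊆ D2 T := fun x hx => ⟨subset_closure hx.1, hx.2.1, hx.2.2⟩

/-- transport lemma: if the directional derivative of `f` in direction `v` vanishes on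
`S2T T` and `p ∈ S2T T`, `p + v ∈ D2 T`, then `f (p + v) = f p`. -/
lemma transport {T : ℝ} (hT : 0 < T) (f : X4 → ℂ) (hf : DifferentiableOn ℝ f (D2 T))
    {v p : X4} (hp : p ∈ S2T T) (hq : p + v ∈ D2 T)
    (hv : ∀ x ∈ S2T T, fderivWithin ℝ f (D2 T) x v = 0) :
    f (p + v) = f p := by
  set ℓ : ℝ → X4 := fun s => p + s • v with hℓdef
  have hseg : ∀ s ∈ Set.Ico (0:ℝ) 1, ℓ s ∈ S2T T := by
    intro s hs
    have := seg_mem_S2T hp hq hs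
    simpa [hℓdef] using this
  have hℓD : ∀ s ∈ Set.Icc (0:ℝ) 1, ℓ s ∈ D2 T := by
    intro s hs
    rcases eq_or_lt_of_le hs.2 with h | h
    · rw [h]; simpa [hℓdef] using hq
    · exact S2T_subset_D2 (hseg s ⟨hs.1, h⟩)
  have hℓder : ∀ s : ℝ, HasDerivAt ℓ v s := by
    intro s
    have h1 : HasDerivAt (fun s : ℝ => s • v) ((1:ℝ) • v) s := (hasDerivAt_id s).smul_const v
    simpa [hℓdef] using h1.const_add p
  set u : ℝ → ℂ := fun s => f (ℓ s) with hudef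
  have hucont : ContinuousOn u (Set.Icc 0 1) := by
    apply hf.continuousOn.comp (Continuous.continuousOn (by fun_prop : Continuous ℓ))
    intro s hs
    exact hℓD s hs
  have huderiv : ∀ s ∈ Set.Ico (0:ℝ) 1, HasDerivWithinAt u 0 (Set.Ici s) s := by
    intro s hs
    have hfd : HasFDerivWithinAt f (fderivWithin ℝ f (D2 T) (ℓ s)) (D2 T) (ℓ s) :=
      (hf (ℓ s) (hℓD s ⟨hs.1, le_of_lt hs.2⟩)).hasFDerivWithinAt
    have hcomp : HasDerivWithinAt u (fderivWithin ℝ f (D2 T) (ℓ s) v) (Set.Icc 0 1) s := by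
      apply HasFDerivWithinAt.comp_hasDerivWithinAt s hfd ((hℓder s).hasDerivWithinAt)
      intro r hr
      exact hℓD r hr
    rw [hv (ℓ s) (hseg s hs)] at hcomp
    have h1 : HasDerivWithinAt u 0 (Set.Icc s 1) s :=
      hcomp.mono (Set.Icc_subset_Icc_left hs.1)
    apply h1.mono_of_mem_nhdsWithin
    have : Set.Icc s 1 = Set.Ici s ∩ Set.Iic 1 := (Set.Ici_inter_Iic).symm
    rw [this]
    exact Filter.inter_mem self_mem_nhdsWithin
      (mem_nhdsWithin_of_mem_nhds (Iic_mem_nhds hs.2))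
  have := constant_of_has_deriv_right_zero hucont huderiv 1 ⟨zero_le_one, le_refl 1⟩
  simpa [hudef, hℓdef] using this

end Chunk2

noncomputable section Chunk3

section Values

variable {T : ℝ} (hT : 0 < T) (g : X4 → (Bool × Bool) → ℂ)
  (hdiff : ∀ su : Bool × Bool, DifferentiableOn ℝ (fun q => g q su) (D2 T))
  (hvan : ∀ su : Bool × Bool, ∀ x ∈ S2T T, ∀ a b : ℝ,
    fderivWithin ℝ (fun q => g q su) (D2 T) x
      (a • (e1T - sval su.1 • e1Z) + b • (e2T - sval su.2 • e2Z)) = 0)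

include hT hdiff hvan

lemma transport_apply (su : Bool × Bool) {q r : X4} (hq : q ∈ S2T T) (hr : r ∈ D2 T)
    (a b : ℝ)
    (hv : r = q + (a • (e1T - sval su.1 • e1Z) + b • (e2T - sval su.2 • e2Z))) :
    g r su = g q su := by
  rw [hv]
  exact transport hT (fun q => g q su) (hdiff su) hq (hv ▸ hr)
    (fun x hx => hvan su x hx a b)

variable (hinit0 : ∀ z₁ z₂ : ℝ, z₁ ≤ z₂ → ∀ su : Bool × Bool, g ((0,z₁),(0,z₂)) su = 0)

include hinit0

lemma val_pp {q : X4} (hq : q ∈ S2T T) :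
    g q (true, true) = 0 := by
  have hz := (mem_S2_iff.1 hq.1)
  have hza := hz.1
  have hzb := hz.2
  obtain ⟨ht1a, ht1b⟩ := Set.mem_Icc.1 hq.2.1
  obtain ⟨ht2a, ht2b⟩ := Set.mem_Icc.1 hq.2.2
  have key := transport_apply hT g hdiff hvan (true, true) hq
    (r := ((0, q.1.2 + q.1.1), (0, q.2.2 + q.2.1))) ?_ (-q.1.1) (-q.2.1) ?_
  · rw [← key]
    exact hinit0 _ _ (by (try dsimp only); linarith) _
  · refine ⟨mem_closure_S2_iff.2 ⟨by (try dsimp only); linarith, by (try dsimp only); linarith⟩,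
      Set.mem_Icc.2 ⟨by (try dsimp only); linarith, by (try dsimp only); linarith⟩, Set.mem_Icc.2 ⟨by (try dsimp only); linarith, by (try dsimp only); linarith⟩⟩
  · simp only [e1T, e1Z, e2T, e2Z, sval, Prod.ext_iff, Prod.smul_fst, Prod.smul_snd,
      Prod.fst_add, Prod.snd_add, Prod.fst_sub, Prod.snd_sub, smul_eq_mul]
    norm_num
    repeat' apply And.intro
    all_goals ring

lemma val_mm {q : X4} (hq : q ∈ S2T T) :
    g q (false, false) = 0 := by
  have hz := (mem_S2_iff.1 hq.1)
  have hza := hz.1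
  have hzb := hz.2
  obtain ⟨ht1a, ht1b⟩ := Set.mem_Icc.1 hq.2.1
  obtain ⟨ht2a, ht2b⟩ := Set.mem_Icc.1 hq.2.2
  have key := transport_apply hT g hdiff hvan (false, false) hq
    (r := ((0, q.1.2 - q.1.1), (0, q.2.2 - q.2.1))) ?_ (-q.1.1) (-q.2.1) ?_
  · rw [← key]
    exact hinit0 _ _ (by (try dsimp only); linarith) _
  · refine ⟨mem_closure_S2_iff.2 ⟨by (try dsimp only); linarith, by (try dsimp only); linarith⟩,
      Set.mem_Icc.2 ⟨by (try dsimp only); linarith, by (try dsimp only); linarith⟩, Set.mem_Icc.2 ⟨by (try dsimp only); linarith, by (try dsimp only); linarith⟩⟩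
  · simp only [e1T, e1Z, e2T, e2Z, sval, Prod.ext_iff, Prod.smul_fst, Prod.smul_snd,
      Prod.fst_add, Prod.snd_add, Prod.fst_sub, Prod.snd_sub, smul_eq_mul]
    norm_num
    repeat' apply And.intro
    all_goals ring

lemma val_pm_zero {q : X4} (hq : q ∈ S2T T) (ht : q.1.1 + q.2.1 + q.1.2 - q.2.2 ≤ 0) :
    g q (true, false) = 0 := by
  have hz := (mem_S2_iff.1 hq.1)
  have hza := hz.1
  have hzb := hz.2
  obtain ⟨ht1a, ht1b⟩ := Set.mem_Icc.1 hq.2.1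
  obtain ⟨ht2a, ht2b⟩ := Set.mem_Icc.1 hq.2.2
  have key := transport_apply hT g hdiff hvan (true, false) hq
    (r := ((0, q.1.2 + q.1.1), (0, q.2.2 - q.2.1))) ?_ (-q.1.1) (-q.2.1) ?_
  · rw [← key]
    exact hinit0 _ _ (by (try dsimp only); linarith) _
  · refine ⟨mem_closure_S2_iff.2 ⟨by (try dsimp only); linarith, by (try dsimp only); linarith⟩,
      Set.mem_Icc.2 ⟨by (try dsimp only); linarith, by (try dsimp only); linarith⟩, Set.mem_Icc.2 ⟨by (try dsimp only); linarith, by (try dsimp only); linarith⟩⟩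
  · simp only [e1T, e1Z, e2T, e2Z, sval, Prod.ext_iff, Prod.smul_fst, Prod.smul_snd,
      Prod.fst_add, Prod.snd_add, Prod.fst_sub, Prod.snd_sub, smul_eq_mul]
    norm_num
    repeat' apply And.intro
    all_goals ring

lemma val_mp_zero {q : X4} (hq : q ∈ S2T T) (ht : 0 ≤ q.1.1 + q.2.1 + q.2.2 - q.1.2) :
    g q (false, true) = 0 := by
  have hz := (mem_S2_iff.1 hq.1)
  have hza := hz.1
  have hzb := hz.2
  obtain ⟨ht1a, ht1b⟩ := Set.mem_Icc.1 hq.2.1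
  obtain ⟨ht2a, ht2b⟩ := Set.mem_Icc.1 hq.2.2
  have key := transport_apply hT g hdiff hvan (false, true) hq
    (r := ((0, q.1.2 - q.1.1), (0, q.2.2 + q.2.1))) ?_ (-q.1.1) (-q.2.1) ?_
  · rw [← key]
    exact hinit0 _ _ (by (try dsimp only); linarith) _
  · refine ⟨mem_closure_S2_iff.2 ⟨by (try dsimp only); linarith, by (try dsimp only); linarith⟩,
      Set.mem_Icc.2 ⟨by (try dsimp only); linarith, by (try dsimp only); linarith⟩, Set.mem_Icc.2 ⟨by (try dsimp only); linarith, by (try dsimp only); linarith⟩⟩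
  · simp only [e1T, e1Z, e2T, e2Z, sval, Prod.ext_iff, Prod.smul_fst, Prod.smul_snd,
      Prod.fst_add, Prod.snd_add, Prod.fst_sub, Prod.snd_sub, smul_eq_mul]
    norm_num
    repeat' apply And.intro
    all_goals ring

lemma val_mp_bdry {t z : ℝ} (ht0 : 0 ≤ t) (htT : t ≤ T) :
    g ((t,z),(t,z)) (false, true) = 0 := by
  rcases eq_or_lt_of_le ht0 with h | h
  · exact h ▸ hinit0 z z le_rfl _
  · have hq0 : ((0, z - t), (0, z + t)) ∈ S2T T := by
      refine ⟨mem_S2_iff.2 ⟨by (try dsimp only); linarith, by (try dsimp only); linarith⟩, ?_, ?_⟩ <;>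
        · (try dsimp only); simp only [Set.mem_Icc]; exact ⟨by linarith, by linarith⟩
    have key := transport_apply hT g hdiff hvan (false, true) hq0
      (r := ((t,z),(t,z))) ?_ t t ?_
    · rw [key]
      exact hinit0 _ _ (by (try dsimp only); linarith) _
    · refine ⟨mem_closure_S2_iff.2 ⟨by (try dsimp only); linarith, by (try dsimp only); linarith⟩, ?_, ?_⟩ <;>
        · (try dsimp only); simp only [Set.mem_Icc]; exact ⟨by linarith, by linarith⟩
    · simp only [e1T, e1Z, e2T, e2Z, sval, Prod.ext_iff, Prod.smul_fst, Prod.smul_snd,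
        Prod.fst_add, Prod.snd_add, Prod.fst_sub, Prod.snd_sub, smul_eq_mul]
      norm_num
      repeat' apply And.intro
      all_goals ring

lemma val_pm_bdry {t z : ℝ} (ht0 : t ≤ 0) (htT : -T ≤ t) :
    g ((t,z),(t,z)) (true, false) = 0 := by
  rcases eq_or_lt_of_le ht0 with h | h
  · exact h ▸ hinit0 z z le_rfl _
  · have hq0 : ((0, z + t), (0, z - t)) ∈ S2T T := by
      refine ⟨mem_S2_iff.2 ⟨by (try dsimp only); linarith, by (try dsimp only); linarith⟩, ?_, ?_⟩ <;>
        · (try dsimp only); simp only [Set.mem_Icc]; exact ⟨by linarith, by linarith⟩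
    have key := transport_apply hT g hdiff hvan (true, false) hq0
      (r := ((t,z),(t,z))) ?_ t t ?_
    · rw [key]
      exact hinit0 _ _ (by (try dsimp only); linarith) _
    · refine ⟨mem_closure_S2_iff.2 ⟨by (try dsimp only); linarith, by (try dsimp only); linarith⟩, ?_, ?_⟩ <;>
        · (try dsimp only); simp only [Set.mem_Icc]; exact ⟨by linarith, by linarith⟩
    · simp only [e1T, e1Z, e2T, e2Z, sval, Prod.ext_iff, Prod.smul_fst, Prod.smul_snd,
        Prod.fst_add, Prod.snd_add, Prod.fst_sub, Prod.snd_sub, smul_eq_mul]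
      norm_num
      repeat' apply And.intro
      all_goals ring

variable (eθ : ℂ) (heθ : eθ ≠ 0) (bd : ℝ → ℝ → ℂ)
  (hibcg : ∀ t : ℝ, -T ≤ t → t ≤ T → ∀ z : ℝ,
    g ((t,z),(t,z)) (false, true) - eθ * g ((t,z),(t,z)) (true, false) = bd t z)

include heθ bd hibcg

lemma val_pm_pos {q : X4} (hq : q ∈ S2T T)
    (ht : 0 < (q.1.1 + q.2.1 + q.1.2 - q.2.2)/2) :
    g q (true, false)
      = -eθ⁻¹ * bd ((q.1.1 + q.2.1 + q.1.2 - q.2.2)/2)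
          ((q.1.2 + q.2.2 + q.1.1 - q.2.1)/2) := by
  set τ := (q.1.1 + q.2.1 + q.1.2 - q.2.2)/2 with hτ
  set ζ := (q.1.2 + q.2.2 + q.1.1 - q.2.1)/2 with hζ
  have hz := (mem_S2_iff.1 hq.1)
  have ht1 := hq.2.1
  have ht2 := hq.2.2
  simp only [Set.mem_Icc] at ht1 ht2
  have hτT : τ ≤ T := by rw [hτ]; (try dsimp only); linarith [hz.1, hz.2]
  have hrD : ((τ, ζ), (τ, ζ)) ∈ D2 T := by
    refine ⟨mem_closure_S2_iff.2 ⟨by (try dsimp only); linarith, by (try dsimp only); linarith⟩, ?_, ?_⟩ <;>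
      · (try dsimp only); simp only [Set.mem_Icc]; exact ⟨by linarith, by linarith⟩
  have key := transport_apply hT g hdiff hvan (true, false)
    ⟨mem_S2_iff.2 hz, Set.mem_Icc.2 ht1, Set.mem_Icc.2 ht2⟩ hrD (τ - q.1.1) (τ - q.2.1) ?_
  · have hb := hibcg τ (by (try dsimp only); linarith) hτT ζ
    have h0 : g ((τ, ζ), (τ, ζ)) (false, true) = 0 :=
      val_mp_bdry hT g hdiff hvan hinit0 (le_of_lt ht) hτT
    rw [h0, zero_sub] at hb
    rw [key.symm, ← hb]
    field_simp
  · simp only [e1T, e1Z, e2T, e2Z, sval, Prod.ext_iff, Prod.smul_fst, Prod.smul_snd,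
      Prod.fst_add, Prod.snd_add, Prod.fst_sub, Prod.snd_sub, smul_eq_mul]
    norm_num
    repeat' apply And.intro
    all_goals ring

lemma val_mp_neg {q : X4} (hq : q ∈ S2T T)
    (ht : (q.1.1 + q.2.1 + q.2.2 - q.1.2)/2 < 0) :
    g q (false, true)
      = bd ((q.1.1 + q.2.1 + q.2.2 - q.1.2)/2) ((q.1.2 + q.2.2 + q.2.1 - q.1.1)/2) := by
  set τ := (q.1.1 + q.2.1 + q.2.2 - q.1.2)/2 with hτ
  set ζ := (q.1.2 + q.2.2 + q.2.1 - q.1.1)/2 with hζ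
  have hz := (mem_S2_iff.1 hq.1)
  have ht1 := hq.2.1
  have ht2 := hq.2.2
  simp only [Set.mem_Icc] at ht1 ht2
  have hτT : -T ≤ τ := by rw [hτ]; (try dsimp only); linarith [hz.1, hz.2]
  have hrD : ((τ, ζ), (τ, ζ)) ∈ D2 T := by
    refine ⟨mem_closure_S2_iff.2 ⟨by (try dsimp only); linarith, by (try dsimp only); linarith⟩, ?_, ?_⟩ <;>
      · (try dsimp only); simp only [Set.mem_Icc]; exact ⟨by linarith, by linarith⟩
  have key := transport_apply hT g hdiff hvan (false, true)
    ⟨mem_S2_iff.2 hz, Set.mem_Icc.2 ht1, Set.mem_Icc.2 ht2⟩ hrD (τ - q.1.1) (τ - q.2.1) ?_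
  · have hb := hibcg τ hτT (by (try dsimp only); linarith) ζ
    have h0 : g ((τ, ζ), (τ, ζ)) (true, false) = 0 :=
      val_pm_bdry hT g hdiff hvan hinit0 (le_of_lt ht) hτT
    rw [h0, mul_zero, sub_zero] at hb
    rw [key.symm, hb]
  · simp only [e1T, e1Z, e2T, e2Z, sval, Prod.ext_iff, Prod.smul_fst, Prod.smul_snd,
      Prod.fst_add, Prod.snd_add, Prod.fst_sub, Prod.snd_sub, smul_eq_mul]
    norm_num
    repeat' apply And.intro
    all_goals ring

end Values
end Chunk3

noncomputable section Chunk4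
open ContinuousLinearMap

lemma convex_strip (T : ℝ) : Convex ℝ (strip T) := by
  intro x hx y hy a b ha hb hab
  simp only [strip, Set.mem_setOf_eq, Set.mem_Icc, Prod.fst_add, Prod.smul_fst,
    smul_eq_mul] at *
  constructor <;> nlinarith [hx.1, hx.2, hy.1, hy.2]

lemma strip_mem_nhds {T : ℝ} {w : ℝ × ℝ} (h1 : -T < w.1) (h2 : w.1 < T) :
    strip T ∈ nhds w := by
  have hopen : IsOpen {p : ℝ × ℝ | p.1 ∈ Set.Ioo (-T) T} := isOpen_Ioo.preimage continuous_fst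
  exact Filter.mem_of_superset (hopen.mem_nhds ⟨h1, h2⟩)
    (fun p hp => Set.Ioo_subset_Icc_self hp)

lemma uniqueDiffOn_strip {T : ℝ} (hT : 0 < T) : UniqueDiffOn ℝ (strip T) := by
  apply uniqueDiffOn_convex (convex_strip T)
  have hopen : IsOpen {p : ℝ × ℝ | p.1 ∈ Set.Ioo (-T) T} := isOpen_Ioo.preimage continuous_fst
  have hsub : {p : ℝ × ℝ | p.1 ∈ Set.Ioo (-T) T} ⊆ strip T :=
    fun p hp => Set.Ioo_subset_Icc_self hp
  refine ⟨(0, 0), interior_maximal hsub hopen ?_⟩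
  simp only [Set.mem_setOf_eq, Set.mem_Ioo]
  exact ⟨by linarith, hT⟩

lemma bsum_bound (B : Bool → ℂ) (v : Bool → ℂ) :
    ‖∑ b : Bool, B b * v b‖ ≤ (‖B false‖ + ‖B true‖) * ‖v‖ := by
  rw [Fintype.sum_bool]
  have h1 : ‖v true‖ ≤ ‖v‖ := norm_le_pi_norm v true
  have h2 : ‖v false‖ ≤ ‖v‖ := norm_le_pi_norm v false
  have h3 := norm_add_le (B true * v true) (B false * v false)
  rw [norm_mul, norm_mul] at h3
  have hbt : ‖B true‖ = ‖B true‖ := rfl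
  have hbf : ‖B false‖ = ‖B false‖ := rfl
  rw [hbt, hbf] at h3
  nlinarith [norm_nonneg (B true), norm_nonneg (B false), norm_nonneg (v true),
    norm_nonneg (v false), norm_nonneg v]

lemma dir_bound {F : Type*} [NormedAddCommGroup F] [NormedSpace ℝ F]
    (D : (ℝ × ℝ) →L[ℝ] F) {a b : ℝ} (ha : |a| ≤ 1/2) (hb : |b| ≤ 1/2) :
    ‖D (a, b)‖ ≤ max ‖D ((1:ℝ), (0:ℝ))‖ ‖D ((0:ℝ), (1:ℝ))‖ := by
  have hv : ((a, b) : ℝ × ℝ) = a • ((1:ℝ), (0:ℝ)) + b • ((0:ℝ), (1:ℝ)) := by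
    simp [Prod.ext_iff]
  rw [hv, _root_.map_add, _root_.map_smul, _root_.map_smul]
  set M := max ‖D ((1:ℝ), (0:ℝ))‖ ‖D ((0:ℝ), (1:ℝ))‖ with hM
  have hM1 : ‖D ((1:ℝ), (0:ℝ))‖ ≤ M := le_max_left _ _
  have hM2 : ‖D ((0:ℝ), (1:ℝ))‖ ≤ M := le_max_right _ _
  have hM0 : 0 ≤ M := le_trans (norm_nonneg _) hM1
  calc ‖a • D ((1:ℝ), (0:ℝ)) + b • D ((0:ℝ), (1:ℝ))‖
      ≤ ‖a • D ((1:ℝ), (0:ℝ))‖ + ‖b • D ((0:ℝ), (1:ℝ))‖ := norm_add_le _ _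
    _ = |a| * ‖D ((1:ℝ), (0:ℝ))‖ + |b| * ‖D ((0:ℝ), (1:ℝ))‖ := by
        rw [norm_smul, norm_smul, Real.norm_eq_abs, Real.norm_eq_abs]
    _ ≤ M := by nlinarith [abs_nonneg a, abs_nonneg b, norm_nonneg (D ((1:ℝ), (0:ℝ))),
        norm_nonneg (D ((0:ℝ), (1:ℝ)))]

lemma wnorm1_nonneg (T γ : ℝ) (h : ℝ × ℝ → Bool → ℂ) (p : ℝ × ℝ) : 0 ≤ wnorm1 T γ h p := by
  unfold wnorm1
  have := norm_nonneg (h p)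
  have := norm_nonneg (fderivWithin ℝ h (strip T) p ((1:ℝ), (0:ℝ)))
  positivity

lemma zero_wnorm_bound (T γ : ℝ) (g : X4 → (Bool × Bool) → ℂ) (p : X4)
    (hp : p ∈ interior (D2 T)) (U : Set X4) (hU : IsOpen U) (hpU : p ∈ U)
    (hgU : ∀ q ∈ U, ∀ su, g q su = 0) (K : ℝ) (hK : 0 ≤ K) :
    wnorm2 T γ g p ≤ K := by
  have heq : g =ᶠ[nhds p] (fun _ _ => 0) := by
    filter_upwards [hU.mem_nhds hpU] with q hq
    funext su
    exact hgU q hq su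
  have hfw : fderivWithin ℝ g (D2 T) p = fderiv ℝ g p :=
    fderivWithin_of_mem_nhds (mem_interior_iff_mem_nhds.1 hp)
  have hfz : fderiv ℝ g p = 0 := by
    rw [heq.fderiv_eq]
    exact fderiv_const_apply _
  have hgp : g p = fun _ => 0 := heq.eq_of_nhds
  unfold wnorm2
  rw [hfw, hfz, hgp]
  simp only [ContinuousLinearMap.zero_apply, norm_zero, max_self, add_zero]
  have : ‖(fun _ : Bool × Bool => (0:ℂ))‖ = 0 := by
    simp [Pi.norm_def]
  rw [this, zero_mul]
  exact hK

lemma formula_wnorm_bound (T : ℝ) (hT : 0 < T) (γ : ℝ) (hγ : 0 < γ)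
    (B : Bool → ℂ) (h : ℝ × ℝ → Bool → ℂ) (hh : ContDiffOn ℝ 1 h (strip T))
    (C : ℝ) (hC : ∀ w ∈ strip T, wnorm1 T γ h w ≤ C)
    (g : X4 → (Bool × Bool) → ℂ)
    (su0 : Bool × Bool) (c : ℂ) (hc : ‖c‖ = 1) (L : X4 →L[ℝ] ℝ × ℝ)
    (hLdir : ∀ e ∈ ({e1T, e1Z, e2T, e2Z} : Set X4), |(L e).1| ≤ 1/2 ∧ |(L e).2| ≤ 1/2)
    (p : X4) (hp : p ∈ interior (D2 T))
    (hLt : |(L p).1| ≤ (|p.1.1| + |p.2.1|)/2)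
    (U : Set X4) (hU : IsOpen U) (hpU : p ∈ U)
    (hgU : ∀ q ∈ U, ∀ su, g q su
      = if su = su0 then c * ∑ b : Bool, B b * h (L q) b else 0) :
    wnorm2 T γ g p ≤ (‖B false‖ + ‖B true‖) * C := by
  obtain ⟨hpS, hpt1, hpt2⟩ := mem_interior_D2 hp
  set w := L p with hw
  have ht1a : |p.1.1| < T := abs_lt.2 ⟨hpt1.1, hpt1.2⟩
  have ht2a : |p.2.1| < T := abs_lt.2 ⟨hpt2.1, hpt2.2⟩
  have hwT : |w.1| < T := lt_of_le_of_lt hLt (by linarith)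
  have hwa := abs_lt.1 hwT
  have hnh : strip T ∈ nhds w := strip_mem_nhds hwa.1 hwa.2
  have hhd : DifferentiableAt ℝ h w := (hh.contDiffAt hnh).differentiableAt one_ne_zero
  set Dh := fderiv ℝ h w with hDh
  have hDh_eq : fderivWithin ℝ h (strip T) w = Dh := fderivWithin_of_mem_nhds hnh
  set Bn := ‖B false‖ + ‖B true‖ with hBn
  have hBn0 : 0 ≤ Bn := add_nonneg (norm_nonneg _) (norm_nonneg _)
  set MD := max ‖Dh ((1:ℝ),(0:ℝ))‖ ‖Dh ((0:ℝ),(1:ℝ))‖ with hMD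
  have hMD0 : 0 ≤ MD := le_trans (norm_nonneg _) (le_max_left _ _)
  -- derivative of the formula
  have M0 : HasFDerivAt (fun q : X4 => h (L q)) (Dh.comp L) p :=
    HasFDerivAt.comp p hhd.hasFDerivAt L.hasFDerivAt
  have Mb : ∀ b : Bool, HasFDerivAt (fun q : X4 => h (L q) b)
      ((ContinuousLinearMap.proj (R := ℝ) (φ := fun _ : Bool => ℂ) b).comp (Dh.comp L)) p :=
    fun b => HasFDerivAt.comp p
      ((ContinuousLinearMap.proj (R := ℝ) (φ := fun _ : Bool => ℂ) b).hasFDerivAt) M0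
  have hsum : HasFDerivAt (fun q : X4 => ∑ b : Bool, B b * h (L q) b)
      (∑ b : Bool, B b • ((ContinuousLinearMap.proj (R := ℝ) (φ := fun _ : Bool => ℂ) b).comp
        (Dh.comp L))) p :=
    HasFDerivAt.fun_sum (fun b _ => (Mb b).const_mul (B b))
  have hfor : HasFDerivAt (fun q : X4 => c * ∑ b : Bool, B b * h (L q) b)
      (c • ∑ b : Bool, B b • ((ContinuousLinearMap.proj (R := ℝ) (φ := fun _ : Bool => ℂ) b).comp
        (Dh.comp L))) p := hsum.const_mul c
  set Mfor := c • ∑ b : Bool, B b • ((ContinuousLinearMap.proj (R := ℝ) (φ := fun _ : Bool => ℂ) b).comp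
    (Dh.comp L)) with hMfor
  set Msu : (Bool × Bool) → (X4 →L[ℝ] ℂ) := fun su => if su = su0 then Mfor else 0 with hMsu
  have heq : ∀ su : Bool × Bool, (fun q => g q su) =ᶠ[nhds p]
      (fun q => if su = su0 then c * ∑ b : Bool, B b * h (L q) b else 0) := by
    intro su
    filter_upwards [hU.mem_nhds hpU] with q hq
    exact hgU q hq su
  have hGder : ∀ su : Bool × Bool, HasFDerivAt (fun q => g q su) (Msu su) p := by
    intro su
    by_cases hsu : su = su0
    · have h1 : HasFDerivAt (fun q : X4 => if su = su0 then c * ∑ b : Bool, B b * h (L q) b else 0)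
          Mfor p := by
        simp only [if_pos hsu]
        exact hfor
      have := h1.congr_of_eventuallyEq (heq su)
      simpa [hMsu, if_pos hsu] using this
    · have h1 : HasFDerivAt (fun _ : X4 => (0:ℂ)) (0 : X4 →L[ℝ] ℂ) p := hasFDerivAt_const 0 p
      have h2 : HasFDerivAt (fun q : X4 => if su = su0 then c * ∑ b : Bool, B b * h (L q) b else 0)
          (0 : X4 →L[ℝ] ℂ) p := by
        simp only [if_neg hsu]
        exact h1
      have := h2.congr_of_eventuallyEq (heq su)
      simpa [hMsu, if_neg hsu] using this
  have hfw : fderivWithin ℝ g (D2 T) p = fderiv ℝ g p :=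
    fderivWithin_of_mem_nhds (mem_interior_iff_mem_nhds.1 hp)
  have hfd : fderiv ℝ g p = ContinuousLinearMap.pi (fun su => Msu su) := by
    have h1 : fderiv ℝ g p = ContinuousLinearMap.pi (fun su => fderiv ℝ (fun q => g q su) p) :=
      fderiv_pi (fun su => (hGder su).differentiableAt)
    rw [h1]
    congr 1
    funext su
    exact (hGder su).fderiv
  -- value bound
  have hval : ‖g p‖ ≤ Bn * ‖h w‖ := by
    apply (pi_norm_le_iff_of_nonneg (by positivity)).2
    intro su
    rw [hgU p hpU su]
    by_cases hsu : su = su0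
    · rw [if_pos hsu, norm_mul, hc, one_mul]
      exact bsum_bound B (h w)
    · rw [if_neg hsu]
      simp only [norm_zero]
      positivity
  -- derivative bound
  have hder : ∀ e ∈ ({e1T, e1Z, e2T, e2Z} : Set X4),
      ‖fderivWithin ℝ g (D2 T) p e‖ ≤ Bn * MD := by
    intro e he
    rw [hfw, hfd]
    apply (pi_norm_le_iff_of_nonneg (by positivity)).2
    intro su
    have happ : (ContinuousLinearMap.pi (fun su => Msu su)) e su = Msu su e := by
      simp [ContinuousLinearMap.pi_apply]
    rw [happ]
    by_cases hsu : su = su0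
    · simp only [hMsu, if_pos hsu, hMfor]
      have hex : (c • ∑ b : Bool, B b • ((ContinuousLinearMap.proj (R := ℝ)
          (φ := fun _ : Bool => ℂ) b).comp (Dh.comp L))) e
          = c * ∑ b : Bool, B b * Dh (L e) b := by
        simp only [ContinuousLinearMap.smul_apply, ContinuousLinearMap.sum_apply,
          ContinuousLinearMap.comp_apply, ContinuousLinearMap.proj_apply,
          ContinuousLinearMap.add_apply, ContinuousLinearMap.coe_smul', Pi.smul_apply,
          smul_eq_mul, Fintype.sum_bool]
        try ring
      rw [hex, norm_mul, hc, one_mul]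
      have hb1 := bsum_bound B (Dh (L e))
      apply le_trans hb1
      apply mul_le_mul_of_nonneg_left _ hBn0
      obtain ⟨ha, hb⟩ := hLdir e he
      have : L e = ((L e).1, (L e).2) := rfl
      rw [this]
      exact dir_bound Dh ha hb
    · simp only [hMsu, if_neg hsu]
      simp only [ContinuousLinearMap.zero_apply, norm_zero]
      positivity
  -- assemble
  have hd1 := hder e1T (by simp)
  have hd2 := hder e1Z (by simp)
  have hd3 := hder e2T (by simp)
  have hd4 := hder e2Z (by simp)
  have hmax : max (max ‖fderivWithin ℝ g (D2 T) p e1T‖ ‖fderivWithin ℝ g (D2 T) p e1Z‖)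
      (max ‖fderivWithin ℝ g (D2 T) p e2T‖ ‖fderivWithin ℝ g (D2 T) p e2Z‖) ≤ Bn * MD :=
    max_le (max_le hd1 hd2) (max_le hd3 hd4)
  have hexp : Real.exp (-γ * (|p.1.1| + |p.2.1|) / 2) ≤ Real.exp (-γ * |w.1|) := by
    apply Real.exp_le_exp.2
    have hkey : γ * |w.1| ≤ γ * ((|p.1.1| + |p.2.1|)/2) := mul_le_mul_of_nonneg_left hLt hγ.le
    linarith
  have hw_strip : w ∈ strip T := by
    have := abs_le.1 (le_of_lt hwT)
    exact ⟨this.1, this.2⟩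
  have hwn1 : (‖h w‖ + MD) * Real.exp (-γ * |w.1|) = wnorm1 T γ h w := by
    unfold wnorm1
    rw [hDh_eq]
  calc wnorm2 T γ g p
      ≤ (Bn * ‖h w‖ + Bn * MD) * Real.exp (-γ * |w.1|) := by
        unfold wnorm2
        apply mul_le_mul (add_le_add hval hmax) hexp (le_of_lt (Real.exp_pos _))
        positivity
    _ = Bn * ((‖h w‖ + MD) * Real.exp (-γ * |w.1|)) := by ring
    _ = Bn * wnorm1 T γ h w := by rw [hwn1]
    _ ≤ Bn * C := mul_le_mul_of_nonneg_left (hC w hw_strip) hBn0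

end Chunk4

noncomputable section Chunk5
open ContinuousLinearMap

def ct1 : X4 →L[ℝ] ℝ := (ContinuousLinearMap.fst ℝ ℝ ℝ).comp (ContinuousLinearMap.fst ℝ (ℝ×ℝ) (ℝ×ℝ))
def cz1 : X4 →L[ℝ] ℝ := (ContinuousLinearMap.snd ℝ ℝ ℝ).comp (ContinuousLinearMap.fst ℝ (ℝ×ℝ) (ℝ×ℝ))
def ct2 : X4 →L[ℝ] ℝ := (ContinuousLinearMap.fst ℝ ℝ ℝ).comp (ContinuousLinearMap.snd ℝ (ℝ×ℝ) (ℝ×ℝ))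
def cz2 : X4 →L[ℝ] ℝ := (ContinuousLinearMap.snd ℝ ℝ ℝ).comp (ContinuousLinearMap.snd ℝ (ℝ×ℝ) (ℝ×ℝ))

def Lpm : X4 →L[ℝ] ℝ × ℝ :=
  ((1/2 : ℝ) • (ct1 + ct2 + cz1 - cz2)).prod ((1/2 : ℝ) • (cz1 + cz2 + ct1 - ct2))

def Lmp : X4 →L[ℝ] ℝ × ℝ :=
  ((1/2 : ℝ) • (ct1 + ct2 + cz2 - cz1)).prod ((1/2 : ℝ) • (cz1 + cz2 + ct2 - ct1))

lemma Lpm_apply (q : X4) :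
    Lpm q = ((q.1.1 + q.2.1 + q.1.2 - q.2.2)/2, (q.1.2 + q.2.2 + q.1.1 - q.2.1)/2) := by
  simp only [Lpm, ct1, cz1, ct2, cz2, ContinuousLinearMap.prod_apply,
    ContinuousLinearMap.smul_apply, ContinuousLinearMap.sub_apply, ContinuousLinearMap.add_apply,
    ContinuousLinearMap.comp_apply, ContinuousLinearMap.coe_fst', ContinuousLinearMap.coe_snd',
    smul_eq_mul, Prod.mk.injEq]
  constructor <;> ring

lemma Lmp_apply (q : X4) :
    Lmp q = ((q.1.1 + q.2.1 + q.2.2 - q.1.2)/2, (q.1.2 + q.2.2 + q.2.1 - q.1.1)/2) := by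
  simp only [Lmp, ct1, cz1, ct2, cz2, ContinuousLinearMap.prod_apply,
    ContinuousLinearMap.smul_apply, ContinuousLinearMap.sub_apply, ContinuousLinearMap.add_apply,
    ContinuousLinearMap.comp_apply, ContinuousLinearMap.coe_fst', ContinuousLinearMap.coe_snd',
    smul_eq_mul, Prod.mk.injEq]
  constructor <;> ring

lemma Lpm_dir : ∀ e ∈ ({e1T, e1Z, e2T, e2Z} : Set X4), |(Lpm e).1| ≤ 1/2 ∧ |(Lpm e).2| ≤ 1/2 := by
  intro e he
  simp only [Set.mem_insert_iff, Set.mem_singleton_iff] at he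
  rcases he with h | h | h | h <;> subst h <;>
    rw [Lpm_apply] <;> constructor <;> simp [e1T, e1Z, e2T, e2Z, abs_le] <;> norm_num

lemma Lmp_dir : ∀ e ∈ ({e1T, e1Z, e2T, e2Z} : Set X4), |(Lmp e).1| ≤ 1/2 ∧ |(Lmp e).2| ≤ 1/2 := by
  intro e he
  simp only [Set.mem_insert_iff, Set.mem_singleton_iff] at he
  rcases he with h | h | h | h <;> subst h <;>
    rw [Lmp_apply] <;> constructor <;> simp [e1T, e1Z, e2T, e2Z, abs_le] <;> norm_num

lemma generic_point_bound (T : ℝ) (hT : 0 < T) (γ : ℝ) (hγ : 0 < γ) (θ : ℝ)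
    (B : Bool → ℂ) (h : ℝ × ℝ → Bool → ℂ) (hh : ContDiffOn ℝ 1 h (strip T))
    (C : ℝ) (hC : ∀ w ∈ strip T, wnorm1 T γ h w ≤ C)
    (g : X4 → (Bool × Bool) → ℂ)
    (hdiff : ∀ su : Bool × Bool, DifferentiableOn ℝ (fun q => g q su) (D2 T))
    (hvan : ∀ su : Bool × Bool, ∀ x ∈ S2T T, ∀ a b : ℝ,
      fderivWithin ℝ (fun q => g q su) (D2 T) x
        (a • (e1T - sval su.1 • e1Z) + b • (e2T - sval su.2 • e2Z)) = 0)
    (hinit0 : ∀ z₁ z₂ : ℝ, z₁ ≤ z₂ → ∀ su : Bool × Bool, g ((0,z₁),(0,z₂)) su = 0)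
    (hibcg : ∀ t : ℝ, -T ≤ t → t ≤ T → ∀ z : ℝ,
      g ((t,z),(t,z)) (false, true) - Complex.exp (θ * Complex.I) * g ((t,z),(t,z)) (true, false)
        = ∑ b : Bool, B b * h (t, z) b)
    (p : X4) (hp : p ∈ interior (D2 T))
    (htp : p.1.1 + p.2.1 + p.1.2 - p.2.2 ≠ 0)
    (htp' : p.1.1 + p.2.1 + p.2.2 - p.1.2 ≠ 0) :
    wnorm2 T γ g p ≤ (‖B false‖ + ‖B true‖) * C := by
  have hC0 : 0 ≤ C := by
    refine le_trans (wnorm1_nonneg T γ h (0,0)) (hC (0,0) ?_)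
    exact ⟨by simp; linarith, by simp; linarith⟩
  have hK0 : 0 ≤ (‖B false‖ + ‖B true‖) * C :=
    mul_nonneg (add_nonneg (norm_nonneg _) (norm_nonneg _)) hC0
  set bd : ℝ → ℝ → ℂ := fun t z => ∑ b : Bool, B b * h (t, z) b with hbd
  have heθ : Complex.exp (θ * Complex.I) ≠ 0 := Complex.exp_ne_zero _
  have hibcg' : ∀ t : ℝ, -T ≤ t → t ≤ T → ∀ z : ℝ,
      g ((t,z),(t,z)) (false, true) - Complex.exp (θ * Complex.I) * g ((t,z),(t,z)) (true, false)
        = bd t z := hibcg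
  have hopen_int : IsOpen (interior (D2 T)) := isOpen_interior
  rcases lt_trichotomy (p.1.1 + p.2.1 + p.1.2 - p.2.2) 0 with hneg | hzero | hpos
  · rcases lt_trichotomy (p.1.1 + p.2.1 + p.2.2 - p.1.2) 0 with hneg' | hzero' | hpos'
    · -- case A : t*' < 0, formula in the (false, true) component
      set U := interior (D2 T) ∩ {q : X4 | q.1.1 + q.2.1 + q.2.2 - q.1.2 < 0} with hU
      have hUopen : IsOpen U :=
        hopen_int.inter (isOpen_lt (by fun_prop) (by fun_prop))
      have hpU : p ∈ U := ⟨hp, hneg'⟩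
      apply formula_wnorm_bound T hT γ hγ B h hh C hC g (false, true) 1 (by simp) Lmp Lmp_dir
        p hp ?_ U hUopen hpU ?_
      · have hgap := mem_S2_iff.1 (mem_interior_D2 hp).1
        have h1 : -p.1.1 ≤ |p.1.1| := neg_le_abs _
        have h2 : -p.2.1 ≤ |p.2.1| := neg_le_abs _
        rw [Lmp_apply]
        show |(p.1.1 + p.2.1 + p.2.2 - p.1.2)/2| ≤ _
        rw [abs_of_neg (by linarith [hgap.1, hgap.2])]
        linarith [hgap.1, hgap.2]
      · intro q hq su
        have hqint := hq.1
        have hqS : q ∈ S2T T := interior_D2_subset_S2T hqint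
        have hgapq := mem_S2_iff.1 hqS.1
        have hqneg : q.1.1 + q.2.1 + q.2.2 - q.1.2 < 0 := hq.2
        have hqpm : q.1.1 + q.2.1 + q.1.2 - q.2.2 ≤ 0 := by linarith [hgapq.1, hgapq.2]
        rcases su with ⟨s1, s2⟩
        rcases s1 <;> rcases s2
        · -- (false, false)
          simp only [show ((false, false) : Bool × Bool) ≠ (false, true) by decide, if_neg,
            ne_eq, not_false_eq_true]
          exact val_mm hT g hdiff hvan hinit0 hqS
        · -- (false, true)
          rw [if_pos rfl, one_mul, Lmp_apply]
          exact val_mp_neg hT g hdiff hvan hinit0 _ heθ bd hibcg' hqS (by linarith)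
        · -- (true, false)
          simp only [show ((true, false) : Bool × Bool) ≠ (false, true) by decide, if_neg,
            ne_eq, not_false_eq_true]
          exact val_pm_zero hT g hdiff hvan hinit0 hqS hqpm
        · -- (true, true)
          simp only [show ((true, true) : Bool × Bool) ≠ (false, true) by decide, if_neg,
            ne_eq, not_false_eq_true]
          exact val_pp hT g hdiff hvan hinit0 hqS
    · exact absurd hzero' htp'
    · -- case B : all components vanish
      set U := (interior (D2 T) ∩ {q : X4 | q.1.1 + q.2.1 + q.1.2 - q.2.2 < 0})
        ∩ {q : X4 | 0 < q.1.1 + q.2.1 + q.2.2 - q.1.2} with hU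
      have hUopen : IsOpen U :=
        (hopen_int.inter (isOpen_lt (by fun_prop) (by fun_prop))).inter
          (isOpen_lt (by fun_prop) (by fun_prop))
      have hpU : p ∈ U := ⟨⟨hp, hneg⟩, hpos'⟩
      apply zero_wnorm_bound T γ g p hp U hUopen hpU ?_ _ hK0
      intro q hq su
      have hqS : q ∈ S2T T := interior_D2_subset_S2T hq.1.1
      rcases su with ⟨s1, s2⟩
      rcases s1 <;> rcases s2
      · exact val_mm hT g hdiff hvan hinit0 hqS
      · exact val_mp_zero hT g hdiff hvan hinit0 hqS (le_of_lt hq.2)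
      · exact val_pm_zero hT g hdiff hvan hinit0 hqS (le_of_lt hq.1.2)
      · exact val_pp hT g hdiff hvan hinit0 hqS
  · exact absurd hzero htp
  · -- case C : t* > 0, formula in the (true, false) component
    set U := interior (D2 T) ∩ {q : X4 | 0 < q.1.1 + q.2.1 + q.1.2 - q.2.2} with hU
    have hUopen : IsOpen U :=
      hopen_int.inter (isOpen_lt (by fun_prop) (by fun_prop))
    have hpU : p ∈ U := ⟨hp, hpos⟩
    have hcnorm : ‖-(Complex.exp (θ * Complex.I))⁻¹‖ = 1 := by
      rw [norm_neg, norm_inv]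
      rw [Complex.norm_exp_ofReal_mul_I, inv_one]
    apply formula_wnorm_bound T hT γ hγ B h hh C hC g (true, false)
      (-(Complex.exp (θ * Complex.I))⁻¹) hcnorm Lpm Lpm_dir p hp ?_ U hUopen hpU ?_
    · have hgap := mem_S2_iff.1 (mem_interior_D2 hp).1
      have h1 : p.1.1 ≤ |p.1.1| := le_abs_self _
      have h2 : p.2.1 ≤ |p.2.1| := le_abs_self _
      rw [Lpm_apply]
      show |(p.1.1 + p.2.1 + p.1.2 - p.2.2)/2| ≤ _
      rw [abs_of_pos (by linarith [hgap.1, hgap.2])]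
      linarith [hgap.1, hgap.2]
    · intro q hq su
      have hqS : q ∈ S2T T := interior_D2_subset_S2T hq.1
      have hgapq := mem_S2_iff.1 hqS.1
      have hqpos : 0 < q.1.1 + q.2.1 + q.1.2 - q.2.2 := hq.2
      have hqmp : 0 ≤ q.1.1 + q.2.1 + q.2.2 - q.1.2 := by linarith [hgapq.1, hgapq.2]
      rcases su with ⟨s1, s2⟩
      rcases s1 <;> rcases s2
      · simp only [show ((false, false) : Bool × Bool) ≠ (true, false) by decide, if_neg,
          ne_eq, not_false_eq_true]
        exact val_mm hT g hdiff hvan hinit0 hqS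
      · simp only [show ((false, true) : Bool × Bool) ≠ (true, false) by decide, if_neg,
          ne_eq, not_false_eq_true]
        exact val_mp_zero hT g hdiff hvan hinit0 hqS hqmp
      · rw [if_pos rfl, Lpm_apply]
        exact val_pm_pos hT g hdiff hvan hinit0 _ heθ bd hibcg' hqS (by linarith)
      · simp only [show ((true, true) : Bool × Bool) ≠ (true, false) by decide, if_neg,
          ne_eq, not_false_eq_true]
        exact val_pp hT g hdiff hvan hinit0 hqS

end Chunk5

noncomputable section Chunk6

lemma norm_e1T : ‖e1T‖ = 1 := by
  rw [Prod.norm_def, Prod.norm_def, Prod.norm_def]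
  simp [e1T, Real.norm_eq_abs]

lemma dense_generic {T : ℝ} (hT : 0 < T) {p : X4} (hp : p ∈ D2 T) :
    p ∈ closure {q : X4 | q ∈ interior (D2 T) ∧ q.1.1 + q.2.1 + q.1.2 - q.2.2 ≠ 0
      ∧ q.1.1 + q.2.1 + q.2.2 - q.1.2 ≠ 0} := by
  rw [Metric.mem_closure_iff]
  intro δ hδ
  obtain ⟨x0, hx0⟩ := interior_D2_nonempty hT
  set s : ℝ := min 1 (δ / (2 * (‖x0 - p‖ + 1))) with hs
  have hnorm_pos : (0:ℝ) < ‖x0 - p‖ + 1 := by positivity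
  have hs_pos : 0 < s := lt_min one_pos (by positivity)
  have hs_le1 : s ≤ 1 := min_le_left _ _
  set x := p + s • (x0 - p) with hx
  have hxint : x ∈ interior (D2 T) :=
    (convex_D2 T).add_smul_sub_mem_interior hp hx0 ⟨hs_pos, hs_le1⟩
  have hdist_px : dist p x < δ/2 := by
    rw [dist_comm, dist_eq_norm, hx,
      show p + s • (x0 - p) - p = s • (x0 - p) from by abel, norm_smul, Real.norm_eq_abs,
      abs_of_pos hs_pos]
    have h1 : s ≤ δ / (2 * (‖x0 - p‖ + 1)) := min_le_right _ _
    calc s * ‖x0 - p‖ ≤ (δ / (2 * (‖x0 - p‖ + 1))) * ‖x0 - p‖ :=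
          mul_le_mul_of_nonneg_right h1 (norm_nonneg _)
      _ < δ/2 := by
          rw [div_mul_eq_mul_div, div_lt_iff₀ (by positivity)]
          nlinarith [norm_nonneg (x0 - p)]
  obtain ⟨ρ, hρ, hball⟩ := Metric.isOpen_iff.1 isOpen_interior x hxint
  set m := min ρ (δ/2) with hm
  have hm0 : 0 < m := lt_min hρ (by linarith)
  have hgood : ∃ ε : ℝ, 0 < ε ∧ ε < m ∧ ε ≠ -(x.1.1 + x.2.1 + x.1.2 - x.2.2)
      ∧ ε ≠ -(x.1.1 + x.2.1 + x.2.2 - x.1.2) := by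
    set A := -(x.1.1 + x.2.1 + x.1.2 - x.2.2) with hA
    set Bv := -(x.1.1 + x.2.1 + x.2.2 - x.1.2) with hBv
    by_cases h1 : m/2 ≠ A ∧ m/2 ≠ Bv
    · exact ⟨m/2, by linarith, by linarith, h1.1, h1.2⟩
    by_cases h2 : m/3 ≠ A ∧ m/3 ≠ Bv
    · exact ⟨m/3, by linarith, by linarith, h2.1, h2.2⟩
    by_cases h3 : m/4 ≠ A ∧ m/4 ≠ Bv
    · exact ⟨m/4, by linarith, by linarith, h3.1, h3.2⟩
    exfalso
    rw [not_and_or, not_ne_iff, not_ne_iff] at h1 h2 h3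
    rcases h1 with h1 | h1 <;> rcases h2 with h2 | h2 <;> rcases h3 with h3 | h3 <;> linarith
  obtain ⟨ε, hε0, hεm, hεA, hεB⟩ := hgood
  refine ⟨x + ε • e1T, ⟨?_, ?_, ?_⟩, ?_⟩
  · apply hball
    rw [Metric.mem_ball, dist_eq_norm, show x + ε • e1T - x = ε • e1T from by abel, norm_smul,
      Real.norm_eq_abs, abs_of_pos hε0, norm_e1T, mul_one]
    exact lt_of_lt_of_le hεm (min_le_left _ _)
  · show (x + ε • e1T).1.1 + (x + ε • e1T).2.1 + (x + ε • e1T).1.2 - (x + ε • e1T).2.2 ≠ 0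
    simp only [e1T, Prod.fst_add, Prod.snd_add, Prod.smul_fst, Prod.smul_snd, smul_eq_mul,
      mul_one, mul_zero, add_zero]
    intro hcontra
    apply hεA
    linarith
  · show (x + ε • e1T).1.1 + (x + ε • e1T).2.1 + (x + ε • e1T).2.2 - (x + ε • e1T).1.2 ≠ 0
    simp only [e1T, Prod.fst_add, Prod.snd_add, Prod.smul_fst, Prod.smul_snd, smul_eq_mul,
      mul_one, mul_zero, add_zero]
    intro hcontra
    apply hεB
    linarith
  · calc dist p (x + ε • e1T) ≤ dist p x + dist x (x + ε • e1T) := dist_triangle _ _ _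
      _ < δ/2 + δ/2 := by
          apply add_lt_add hdist_px
          rw [dist_eq_norm, show x - (x + ε • e1T) = -(ε • e1T) from by abel, norm_neg, norm_smul,
            Real.norm_eq_abs, abs_of_pos hε0, norm_e1T, mul_one]
          exact lt_of_lt_of_le hεm (min_le_right _ _)
      _ = δ := by ring

end Chunk6

noncomputable section Chunk7

lemma wnorm2_continuousOn {T γ : ℝ} (hT : 0 < T)
    (g : X4 → (Bool × Bool) → ℂ) (hg : ContDiffOn ℝ 1 g (D2 T)) :
    ContinuousOn (wnorm2 T γ g) (D2 T) := by
  have hF : ContinuousOn (fun p => fderivWithin ℝ g (D2 T) p) (D2 T) :=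
    hg.continuousOn_fderivWithin (uniqueDiffOn_D2 hT) le_rfl
  have happ : ∀ e : X4, ContinuousOn (fun p => ‖fderivWithin ℝ g (D2 T) p e‖) (D2 T) :=
    fun e => (hF.clm_apply continuousOn_const).norm
  have hgc : ContinuousOn (fun p => ‖g p‖) (D2 T) := hg.continuousOn.norm
  have hexp : Continuous (fun p : X4 => Real.exp (-γ * (|p.1.1| + |p.2.1|) / 2)) := by fun_prop
  unfold wnorm2
  have hmax : ContinuousOn (fun p =>
      max (max ‖fderivWithin ℝ g (D2 T) p e1T‖ ‖fderivWithin ℝ g (D2 T) p e1Z‖)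
        (max ‖fderivWithin ℝ g (D2 T) p e2T‖ ‖fderivWithin ℝ g (D2 T) p e2Z‖)) (D2 T) :=
    ContinuousOn.sup (ContinuousOn.sup (happ e1T) (happ e1Z)) (ContinuousOn.sup (happ e2T) (happ e2Z))
  exact (hgc.add hmax).mul hexp.continuousOn

end Chunk7

/-- The contraction estimate for the two-particle sector:
‖ψ² − φ²‖_{2,γ} ≤ ‖B‖_∞ ‖ψ¹ − φ¹‖_{1,γ}, formulated via upper bounds C for the weighted
one-particle norm. Here ‖B‖_∞ = |B₋| + |B₊| is the operator norm of the row vector B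
from (ℂ², max-norm) to ℂ. -/
theorem two_particle_sector_contraction_estimate
    (T : ℝ) (hT : 0 < T) (γ : ℝ) (hγ : 0 < γ) (θ : ℝ) (B : Bool → ℂ)
    (ψ1 φ1 : ℝ × ℝ → Bool → ℂ)
    (hψ1 : C1bOn (strip T) ψ1) (hφ1 : C1bOn (strip T) φ1)
    (ψ2 φ2 : (ℝ × ℝ) × (ℝ × ℝ) → Bool × Bool → ℂ)
    (hψ2 : C1bOn (D2 T) ψ2) (hφ2 : C1bOn (D2 T) φ2)
    -- both satisfy the free massless multi-time Dirac equations on the interior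
    (heqψ : ∀ su : Bool × Bool, ∀ p ∈ S2T T,
      Complex.I * (fderivWithin ℝ (fun q => ψ2 q su) (D2 T) p e1T
          - (sval su.1 : ℂ) * fderivWithin ℝ (fun q => ψ2 q su) (D2 T) p e1Z) = 0
        ∧ Complex.I * (fderivWithin ℝ (fun q => ψ2 q su) (D2 T) p e2T
          - (sval su.2 : ℂ) * fderivWithin ℝ (fun q => ψ2 q su) (D2 T) p e2Z) = 0)
    (heqφ : ∀ su : Bool × Bool, ∀ p ∈ S2T T,
      Complex.I * (fderivWithin ℝ (fun q => φ2 q su) (D2 T) p e1T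
          - (sval su.1 : ℂ) * fderivWithin ℝ (fun q => φ2 q su) (D2 T) p e1Z) = 0
        ∧ Complex.I * (fderivWithin ℝ (fun q => φ2 q su) (D2 T) p e2T
          - (sval su.2 : ℂ) * fderivWithin ℝ (fun q => φ2 q su) (D2 T) p e2Z) = 0)
    -- the interior-boundary conditions with boundary data Bψ¹ resp. Bφ¹
    (hibcψ : ∀ t ∈ Set.Icc (-T) T, ∀ z : ℝ,
      ψ2 ((t, z), (t, z)) (false, true)
          - Complex.exp (θ * Complex.I) * ψ2 ((t, z), (t, z)) (true, false)
        = ∑ b : Bool, B b * ψ1 (t, z) b)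
    (hibcφ : ∀ t ∈ Set.Icc (-T) T, ∀ z : ℝ,
      φ2 ((t, z), (t, z)) (false, true)
          - Complex.exp (θ * Complex.I) * φ2 ((t, z), (t, z)) (true, false)
        = ∑ b : Bool, B b * φ1 (t, z) b)
    -- same initial data
    (hinit : ∀ z₁ z₂ : ℝ, z₁ ≤ z₂ → ψ2 ((0, z₁), (0, z₂)) = φ2 ((0, z₁), (0, z₂))) :
    ∀ C : ℝ,
      (∀ p ∈ strip T, wnorm1 T γ (fun q b => ψ1 q b - φ1 q b) p ≤ C) →
      ∀ p ∈ D2 T, wnorm2 T γ (fun q su => ψ2 q su - φ2 q su) p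
        ≤ (‖B false‖ + ‖B true‖) * C := by
  intro C hC p hpD2
  -- abbreviations
  have hgC : ContDiffOn ℝ 1 (fun q su => ψ2 q su - φ2 q su) (D2 T) := hψ2.1.sub hφ2.1
  have hh : ContDiffOn ℝ 1 (fun w b => ψ1 w b - φ1 w b) (strip T) := hψ1.1.sub hφ1.1
  have hcψ : ∀ su : Bool × Bool, ContDiffOn ℝ 1 (fun q => ψ2 q su) (D2 T) := fun su =>
    (ContinuousLinearMap.proj (R := ℝ) (φ := fun _ : Bool × Bool => ℂ) su).contDiff.comp_contDiffOn
      hψ2.1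
  have hcφ : ∀ su : Bool × Bool, ContDiffOn ℝ 1 (fun q => φ2 q su) (D2 T) := fun su =>
    (ContinuousLinearMap.proj (R := ℝ) (φ := fun _ : Bool × Bool => ℂ) su).contDiff.comp_contDiffOn
      hφ2.1
  have hdiff : ∀ su : Bool × Bool,
      DifferentiableOn ℝ (fun q => (fun q su => ψ2 q su - φ2 q su) q su) (D2 T) := fun su =>
    ((hcψ su).sub (hcφ su)).differentiableOn one_ne_zero
  have hvan : ∀ su : Bool × Bool, ∀ x ∈ S2T T, ∀ a b : ℝ,
      fderivWithin ℝ (fun q => (fun q su => ψ2 q su - φ2 q su) q su) (D2 T) x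
        (a • (e1T - sval su.1 • e1Z) + b • (e2T - sval su.2 • e2Z)) = 0 := by
    intro su x hx a b
    have hud : UniqueDiffWithinAt ℝ (D2 T) x := uniqueDiffOn_D2 hT x (S2T_subset_D2 hx)
    have hdψ : DifferentiableWithinAt ℝ (fun q => ψ2 q su) (D2 T) x :=
      ((hcψ su).differentiableOn one_ne_zero) x (S2T_subset_D2 hx)
    have hdφ : DifferentiableWithinAt ℝ (fun q => φ2 q su) (D2 T) x :=
      ((hcφ su).differentiableOn one_ne_zero) x (S2T_subset_D2 hx)
    have hsub : fderivWithin ℝ (fun q => (fun q su => ψ2 q su - φ2 q su) q su) (D2 T) x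
        = fderivWithin ℝ (fun q => ψ2 q su) (D2 T) x
          - fderivWithin ℝ (fun q => φ2 q su) (D2 T) x := fderivWithin_sub hud hdψ hdφ
    set F := fderivWithin ℝ (fun q => ψ2 q su) (D2 T) x with hF
    set G := fderivWithin ℝ (fun q => φ2 q su) (D2 T) x with hG
    have hcancel : ∀ A Bc : ℂ, Complex.I * (A - Bc) = 0 → A = Bc := by
      intro A Bc hI
      rcases mul_eq_zero.1 hI with hI' | h0
      · exact absurd hI' Complex.I_ne_zero
      · exact sub_eq_zero.1 h0
    have hFe1 : F e1T = (sval su.1 : ℂ) * F e1Z := hcancel _ _ ((heqψ su x hx).1)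
    have hFe2 : F e2T = (sval su.2 : ℂ) * F e2Z := hcancel _ _ ((heqψ su x hx).2)
    have hGe1 : G e1T = (sval su.1 : ℂ) * G e1Z := hcancel _ _ ((heqφ su x hx).1)
    have hGe2 : G e2T = (sval su.2 : ℂ) * G e2Z := hcancel _ _ ((heqφ su x hx).2)
    rw [hsub]
    simp only [ContinuousLinearMap.sub_apply, _root_.map_add, _root_.map_sub, _root_.map_smul, Complex.real_smul]
    rw [hFe1, hFe2, hGe1, hGe2]
    ring
  have hinit0 : ∀ z₁ z₂ : ℝ, z₁ ≤ z₂ → ∀ su : Bool × Bool,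
      (fun q su => ψ2 q su - φ2 q su) ((0,z₁),(0,z₂)) su = 0 := by
    intro z₁ z₂ hle su
    exact sub_eq_zero.2 (congrFun (hinit z₁ z₂ hle) su)
  have hibcg : ∀ t : ℝ, -T ≤ t → t ≤ T → ∀ z : ℝ,
      (fun q su => ψ2 q su - φ2 q su) ((t,z),(t,z)) (false, true)
        - Complex.exp (θ * Complex.I)
          * (fun q su => ψ2 q su - φ2 q su) ((t,z),(t,z)) (true, false)
        = ∑ b : Bool, B b * (fun w b => ψ1 w b - φ1 w b) (t, z) b := by
    intro t h1 h2 z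
    have hψ := hibcψ t ⟨h1, h2⟩ z
    have hφ := hibcφ t ⟨h1, h2⟩ z
    simp only [Fintype.sum_bool] at hψ hφ ⊢
    ring_nf
    ring_nf at hψ hφ
    linear_combination hψ - hφ
  -- continuity + density reduction to generic points
  have hWcont : ContinuousOn (wnorm2 T γ (fun q su => ψ2 q su - φ2 q su)) (D2 T) :=
    wnorm2_continuousOn hT _ hgC
  set E : Set X4 := {q : X4 | q ∈ interior (D2 T) ∧ q.1.1 + q.2.1 + q.1.2 - q.2.2 ≠ 0
      ∧ q.1.1 + q.2.1 + q.2.2 - q.1.2 ≠ 0} with hE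
  have hEsub : E ⊆ D2 T := fun q hq => interior_subset hq.1
  have hclo : p ∈ closure E := dense_generic hT hpD2
  have hne : (nhdsWithin p E).NeBot := mem_closure_iff_nhdsWithin_neBot.1 hclo
  have htend : Filter.Tendsto (wnorm2 T γ (fun q su => ψ2 q su - φ2 q su)) (nhdsWithin p E)
      (nhds (wnorm2 T γ (fun q su => ψ2 q su - φ2 q su) p)) :=
    (hWcont p hpD2).mono_left (nhdsWithin_mono p hEsub)
  apply le_of_tendsto htend
  apply Filter.eventually_of_mem self_mem_nhdsWithin
  intro q hq
  exact generic_point_bound T hT γ hγ θ B (fun w b => ψ1 w b - φ1 w b) hh C hC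
    (fun q su => ψ2 q su - φ2 q su) hdiff hvan hinit0 hibcg q hq.1 hq.2.1 hq.2.2
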